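/- Let m ≥ 2 be an integer and let a_{j,l} (2 ≤ j ≤ m, 1 ≤ l ≤ j−1) be integers determining an m-stage Bott manifold. Then the Fano criterion ∑_{q=1}^{m−p} |b_{p,q}| ≤ 1 holds for every p = 1, …, m−1 if and only if for every p = 1, …, m−1 one of the following three conditions holds: (1) a_{p+1,p} = a_{p+2,p} = ⋯ = a_{m,p} = 0; (2) there exists q with 1 ≤ q ≤ m−p such that a_{p+q,p} = 1 and a_{p+r,p} = 0 for all r ≠ q with 1 ≤ r ≤ m−p; (3) there exists q with 1 ≤ q ≤ m−p such that a_{p+r,p} = 0 for 1 ≤ r ≤ q−1, a_{p+q,p} = −1, and a_{p+r,p} = a_{p+r,p+q} for q+1 ≤ r ≤ m−p. -/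

import Mathlib

/-- For an `m`-stage Bott manifold determined by integers `a j l` (`2 ≤ j ≤ m`,
`1 ≤ l ≤ j−1`), with `b p q` defined recursively by `b p 1 = a (p+1) p` and
`b p q = a (p+q) p + ∑_{r=1}^{q−1} min(0, b p r) · a (p+q) (p+r)`:
the Fano criterion `∑_{q=1}^{m−p} |b p q| ≤ 1` holds for every `p = 1, …, m−1`
if and only if for every `p = 1, …, m−1` one of the three conditions (1), (2), (3)
of the theorem holds. -/
theorem stmt_5 (m : ℕ) (hm : 2 ≤ m) (a : ℕ → ℕ → ℤ) (b : ℕ → ℕ → ℤ)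
    (hb1 : ∀ p, 1 ≤ p → p ≤ m - 1 → b p 1 = a (p + 1) p)
    (hbq : ∀ p q, 1 ≤ p → 2 ≤ q → p + q ≤ m →
      b p q = a (p + q) p + ∑ r ∈ Finset.Icc 1 (q - 1), min 0 (b p r) * a (p + q) (p + r)) :
    (∀ p, 1 ≤ p → p ≤ m - 1 → ∑ q ∈ Finset.Icc 1 (m - p), |b p q| ≤ 1) ↔
    (∀ p, 1 ≤ p → p ≤ m - 1 →
      (∀ r, 1 ≤ r → r ≤ m - p → a (p + r) p = 0) ∨
      (∃ q, 1 ≤ q ∧ q ≤ m - p ∧ a (p + q) p = 1 ∧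
        ∀ r, 1 ≤ r → r ≤ m - p → r ≠ q → a (p + r) p = 0) ∨
      (∃ q, 1 ≤ q ∧ q ≤ m - p ∧
        (∀ r, 1 ≤ r → r ≤ q - 1 → a (p + r) p = 0) ∧
        a (p + q) p = -1 ∧
        (∀ r, q + 1 ≤ r → r ≤ m - p → a (p + r) p = a (p + r) (p + q)))) := by
  constructor
  · -- forward direction
    intro H p hp1 hp2
    have hS := H p hp1 hp2
    by_cases hneg : ∃ q₀, 1 ≤ q₀ ∧ q₀ ≤ m - p ∧ b p q₀ < 0
    · -- negative case : condition (3)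
      obtain ⟨q₀, hq1, hq2, hq₀⟩ := hneg
      have hq₀mem : q₀ ∈ Finset.Icc 1 (m - p) := Finset.mem_Icc.mpr ⟨hq1, hq2⟩
      have hle : |b p q₀| ≤ 1 :=
        le_trans (Finset.single_le_sum (fun i _ => abs_nonneg (b p i)) hq₀mem) hS
      have hbq₀ : b p q₀ = -1 := by
        have h := abs_of_neg hq₀; omega
      have h1 : |b p q₀| = 1 := by rw [hbq₀]; norm_num
      have hrest : ∀ r, 1 ≤ r → r ≤ m - p → r ≠ q₀ → b p r = 0 := by
        intro r hr1 hr2 hrne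
        have herase := Finset.sum_erase_add (Finset.Icc 1 (m - p)) (fun q => |b p q|) hq₀mem
        have hnn : 0 ≤ ∑ q ∈ (Finset.Icc 1 (m - p)).erase q₀, |b p q| :=
          Finset.sum_nonneg fun i _ => abs_nonneg (b p i)
        have hz : ∑ q ∈ (Finset.Icc 1 (m - p)).erase q₀, |b p q| = 0 := by
          omega
        have := (Finset.sum_eq_zero_iff_of_nonneg (fun i _ => abs_nonneg (b p i))).mp hz r
          (Finset.mem_erase.mpr ⟨hrne, Finset.mem_Icc.mpr ⟨hr1, hr2⟩⟩)
        exact abs_eq_zero.mp this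
      -- b p r agrees with a (p+r) p for r ≤ q₀
      have hsmall : ∀ r, 1 ≤ r → r ≤ q₀ → b p r = a (p + r) p := by
        intro r hr1 hr2
        rcases Nat.lt_or_ge r 2 with hr | hr
        · have : r = 1 := by omega
          rw [this]; exact hb1 p hp1 hp2
        · rw [hbq p r hp1 hr (by omega)]
          have hz : ∑ s ∈ Finset.Icc 1 (r - 1), min 0 (b p s) * a (p + r) (p + s) = 0 := by
            apply Finset.sum_eq_zero
            intro s hs
            rw [Finset.mem_Icc] at hs
            rw [hrest s hs.1 (by omega) (by omega)]
            simp
          rw [hz, add_zero]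
      right; right
      refine ⟨q₀, hq1, hq2, ?_, ?_, ?_⟩
      · intro r hr1 hr2
        rw [← hsmall r hr1 (by omega)]
        exact hrest r hr1 (by omega) (by omega)
      · rw [← hsmall q₀ hq1 le_rfl]; exact hbq₀
      · intro r hr1 hr2
        have hr2' : 2 ≤ r := by omega
        have hbr : b p r = 0 := hrest r (by omega) hr2 (by omega)
        rw [hbq p r hp1 hr2' (by omega)] at hbr
        have hsingle : ∑ s ∈ Finset.Icc 1 (r - 1), min 0 (b p s) * a (p + r) (p + s)
            = min 0 (b p q₀) * a (p + r) (p + q₀) := by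
          apply Finset.sum_eq_single_of_mem q₀ (Finset.mem_Icc.mpr ⟨hq1, by omega⟩)
          intro s hs hsne
          rw [Finset.mem_Icc] at hs
          rw [hrest s hs.1 (by omega) hsne]
          simp
        rw [hsingle, hbq₀] at hbr
        simp only [show min (0:ℤ) (-1) = -1 by norm_num] at hbr
        linarith
    · -- nonnegative case : condition (1) or (2)
      push_neg at hneg
      have hba : ∀ q, 1 ≤ q → q ≤ m - p → b p q = a (p + q) p := by
        intro q h1 h2
        rcases Nat.lt_or_ge q 2 with hq | hq
        · have : q = 1 := by omega
          rw [this]; exact hb1 p hp1 hp2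
        · rw [hbq p q hp1 hq (by omega)]
          have hz : ∑ s ∈ Finset.Icc 1 (q - 1), min 0 (b p s) * a (p + q) (p + s) = 0 := by
            apply Finset.sum_eq_zero
            intro s hs
            rw [Finset.mem_Icc] at hs
            have := hneg s hs.1 (by omega)
            rw [min_eq_left (by omega)]
            simp
          rw [hz, add_zero]
      by_cases hall : ∀ r, 1 ≤ r → r ≤ m - p → a (p + r) p = 0
      · exact Or.inl hall
      · push_neg at hall
        obtain ⟨q₀, hq1, hq2, hq₀⟩ := hall
        have hq₀mem : q₀ ∈ Finset.Icc 1 (m - p) := Finset.mem_Icc.mpr ⟨hq1, hq2⟩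
        have hbv : b p q₀ = a (p + q₀) p := hba q₀ hq1 hq2
        have hle : |b p q₀| ≤ 1 :=
          le_trans (Finset.single_le_sum (fun i _ => abs_nonneg (b p i)) hq₀mem) hS
        have hnn : 0 ≤ b p q₀ := hneg q₀ hq1 hq2
        have hone : a (p + q₀) p = 1 := by
          rw [← hbv]; rw [← hbv] at hq₀
          have := abs_of_nonneg hnn; omega
        have h1 : |b p q₀| = 1 := by rw [hbv, hone]; norm_num
        have hrest : ∀ r, 1 ≤ r → r ≤ m - p → r ≠ q₀ → a (p + r) p = 0 := by
          intro r hr1 hr2 hrne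
          have herase := Finset.sum_erase_add (Finset.Icc 1 (m - p)) (fun q => |b p q|) hq₀mem
          have hnn' : 0 ≤ ∑ q ∈ (Finset.Icc 1 (m - p)).erase q₀, |b p q| :=
            Finset.sum_nonneg fun i _ => abs_nonneg (b p i)
          have hz : ∑ q ∈ (Finset.Icc 1 (m - p)).erase q₀, |b p q| = 0 := by
            omega
          have := (Finset.sum_eq_zero_iff_of_nonneg (fun i _ => abs_nonneg (b p i))).mp hz r
            (Finset.mem_erase.mpr ⟨hrne, Finset.mem_Icc.mpr ⟨hr1, hr2⟩⟩)
          have hb0 := abs_eq_zero.mp this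
          rw [← hba r hr1 hr2]; exact hb0
        exact Or.inr (Or.inl ⟨q₀, hq1, hq2, hone, hrest⟩)
  · -- backward direction
    intro H p hp1 hp2
    rcases H p hp1 hp2 with h1 | h2 | h3
    · -- case (1): all b's are zero
      have key : ∀ q, 1 ≤ q → q ≤ m - p → b p q = 0 := by
        intro q
        induction q using Nat.strong_induction_on with
        | _ q ih =>
          intro hq1 hq2
          rcases Nat.lt_or_ge q 2 with hq | hq
          · have : q = 1 := by omega
            subst this
            rw [hb1 p hp1 hp2]; exact h1 1 le_rfl hq2
          · rw [hbq p q hp1 hq (by omega)]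
            have hz : ∑ s ∈ Finset.Icc 1 (q - 1), min 0 (b p s) * a (p + q) (p + s) = 0 := by
              apply Finset.sum_eq_zero
              intro s hs
              rw [Finset.mem_Icc] at hs
              rw [ih s (by omega) hs.1 (by omega)]
              simp
            rw [hz, add_zero]; exact h1 q hq1 hq2
      calc ∑ q ∈ Finset.Icc 1 (m - p), |b p q| = 0 := by
            apply Finset.sum_eq_zero
            intro q hq
            rw [Finset.mem_Icc] at hq
            rw [key q hq.1 hq.2]; simp
        _ ≤ 1 := by norm_num
    · -- case (2)
      obtain ⟨q₀, hq1, hq2, hone, hrest⟩ := h2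
      have key : ∀ q, 1 ≤ q → q ≤ m - p → b p q = a (p + q) p := by
        intro q
        induction q using Nat.strong_induction_on with
        | _ q ih =>
          intro hq1' hq2'
          rcases Nat.lt_or_ge q 2 with hq | hq
          · have : q = 1 := by omega
            subst this
            exact hb1 p hp1 hp2
          · rw [hbq p q hp1 hq (by omega)]
            have hz : ∑ s ∈ Finset.Icc 1 (q - 1), min 0 (b p s) * a (p + q) (p + s) = 0 := by
              apply Finset.sum_eq_zero
              intro s hs
              rw [Finset.mem_Icc] at hs
              have hbs : b p s = a (p + s) p := ih s (by omega) hs.1 (by omega)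
              have hnn : 0 ≤ b p s := by
                rw [hbs]
                by_cases hsq : s = q₀
                · rw [hsq, hone]; norm_num
                · rw [hrest s hs.1 (by omega) hsq]
              rw [min_eq_left hnn]; simp
            rw [hz, add_zero]
      have hsum : ∑ q ∈ Finset.Icc 1 (m - p), |b p q| = 1 := by
        rw [Finset.sum_eq_single_of_mem q₀ (Finset.mem_Icc.mpr ⟨hq1, hq2⟩)]
        · rw [key q₀ hq1 hq2, hone]; norm_num
        · intro s hs hsne
          rw [Finset.mem_Icc] at hs
          rw [key s hs.1 hs.2, hrest s hs.1 hs.2 hsne]; simp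
      rw [hsum]
    · -- case (3)
      obtain ⟨q₀, hq1, hq2, hbefore, haq, hafter⟩ := h3
      have key : ∀ q, 1 ≤ q → q ≤ m - p → b p q = if q = q₀ then -1 else 0 := by
        intro q
        induction q using Nat.strong_induction_on with
        | _ q ih =>
          intro hq1' hq2'
          rcases lt_trichotomy q q₀ with hlt | heq | hgt
          · rw [if_neg (by omega)]
            rcases Nat.lt_or_ge q 2 with hq | hq
            · have : q = 1 := by omega
              subst this
              rw [hb1 p hp1 hp2]; exact hbefore 1 le_rfl (by omega)
            · rw [hbq p q hp1 hq (by omega)]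
              have hz : ∑ s ∈ Finset.Icc 1 (q - 1), min 0 (b p s) * a (p + q) (p + s) = 0 := by
                apply Finset.sum_eq_zero
                intro s hs
                rw [Finset.mem_Icc] at hs
                rw [ih s (by omega) hs.1 (by omega), if_neg (by omega)]
                simp
              rw [hz, add_zero]; exact hbefore q hq1' (by omega)
          · rw [if_pos heq]
            subst heq
            rcases Nat.lt_or_ge q 2 with hq | hq
            · have : q = 1 := by omega
              rw [this] at haq ⊢
              rw [hb1 p hp1 hp2]; exact haq
            · rw [hbq p q hp1 hq (by omega)]
              have hz : ∑ s ∈ Finset.Icc 1 (q - 1), min 0 (b p s) * a (p + q) (p + s) = 0 := by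
                apply Finset.sum_eq_zero
                intro s hs
                rw [Finset.mem_Icc] at hs
                rw [ih s (by omega) hs.1 (by omega), if_neg (by omega)]
                simp
              rw [hz, add_zero]; exact haq
          · rw [if_neg (by omega)]
            have hq : 2 ≤ q := by omega
            rw [hbq p q hp1 hq (by omega)]
            have hsingle : ∑ s ∈ Finset.Icc 1 (q - 1), min 0 (b p s) * a (p + q) (p + s)
                = min 0 (b p q₀) * a (p + q) (p + q₀) := by
              apply Finset.sum_eq_single_of_mem q₀ (Finset.mem_Icc.mpr ⟨hq1, by omega⟩)
              intro s hs hsne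
              rw [Finset.mem_Icc] at hs
              rw [ih s (by omega) hs.1 (by omega), if_neg hsne]
              simp
            have hbq0 : b p q₀ = -1 := by
              rw [ih q₀ hgt hq1 (by omega), if_pos rfl]
            rw [hsingle, hbq0, hafter q (by omega) hq2']
            norm_num
      have hsum : ∑ q ∈ Finset.Icc 1 (m - p), |b p q| = 1 := by
        rw [Finset.sum_eq_single_of_mem q₀ (Finset.mem_Icc.mpr ⟨hq1, hq2⟩)]
        · rw [key q₀ hq1 hq2, if_pos rfl]; norm_num
        · intro s hs hsne
          rw [Finset.mem_Icc] at hs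
          rw [key s hs.1 hs.2, if_neg hsne]; simp
      rw [hsum]
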